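/- Let u, v : ℝ → ℝ be continuous, b, β : ℝ → (0,∞) continuous, H : [0,∞) → [0,∞) continuous and strictly increasing with H(0)=0, and h : [0,∞) → [0,∞) continuous and nondecreasing. Suppose |u(t)| ≤ b(t)·H(v(t)) for all t, u is differentiable with u'(t) ≥ β(t)·h(v(t)), and there exists t₀ with u(t₀) > 0 and u(t) ≥ u(t₀) for t ≥ t₀. If limsup_{t→∞} (1/b(t))·∫_{t₀}^{t} β(s)·h(H⁻¹(u(t₀)/b(s))) ds = ∞, then limsup_{t→∞} v(t) = ∞. -/

import Mathlib

open Set Filter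

theorem stmt_6 (u v b β H Hinv h : ℝ → ℝ)
    (hu : Differentiable ℝ u) (hvcont : Continuous v) (hvnonneg : ∀ t, 0 ≤ v t)
    (hb : Continuous b) (hbpos : ∀ t, 0 < b t)
    (hβ : Continuous β) (hβpos : ∀ t, 0 < β t)
    (hHcont : ContinuousOn H (Ici 0)) (hHmono : StrictMonoOn H (Ici 0))
    (hH0 : H 0 = 0) (hHnonneg : ∀ y ∈ Ici 0, H y ∈ Ici (0:ℝ))
    (hHinv : ∀ y ∈ Ici (0:ℝ), Hinv y ∈ Ici (0:ℝ) ∧ H (Hinv y) = y)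
    (hHinv' : ∀ x ∈ Ici (0:ℝ), Hinv (H x) = x)
    (hhcont : ContinuousOn h (Ici 0)) (hhmono : MonotoneOn h (Ici 0))
    (hhnonneg : ∀ s ∈ Ici (0:ℝ), 0 ≤ h s) (hhpos : ∀ s > (0:ℝ), 0 < h s)
    (hub : ∀ t, |u t| ≤ b t * H (v t))
    (hud : ∀ t, β t * h (v t) ≤ deriv u t)
    (t₀ : ℝ) (hu₀ : 0 < u t₀) (hge : ∀ t ≥ t₀, u t₀ ≤ u t)
    (hlimsup : ∀ M : ℝ, ∃ᶠ t in atTop,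
      M < (1 / b t) * ∫ s in t₀..t, β s * h (Hinv (u t₀ / b s))) :
    ∀ M : ℝ, ∃ᶠ t in atTop, M < v t := by
  -- Hinv is strictly monotone on Ici 0
  have hHinvMono : StrictMonoOn Hinv (Ici 0) := by
    intro x hx y hy hxy
    rcases hHinv x hx with ⟨hx0, hxH⟩
    rcases hHinv y hy with ⟨hy0, hyH⟩
    by_contra hcon
    push_neg at hcon
    have : y ≤ x := by
      have := hHmono.monotoneOn hy0 hx0 hcon
      rwa [hxH, hyH] at this
    exact absurd hxy (not_lt.2 this)
  -- Hinv is continuous on Ici 0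
  have hHinv0 : Hinv 0 = 0 := by
    have := hHinv' 0 (mem_Ici.2 le_rfl)
    rwa [hH0] at this
  have hHinvCont : ContinuousOn Hinv (Ici 0) := by
    intro a ha
    rcases eq_or_lt_of_le (mem_Ici.1 ha) with rfl | hapos
    · -- a = 0
      have : ContinuousWithinAt Hinv (Ici 0) 0 := by
        apply hHinvMono.continuousWithinAt_right_of_surjOn self_mem_nhdsWithin
        intro x hx
        rw [hHinv0] at hx
        have hx0 : (0:ℝ) ≤ x := le_of_lt hx
        exact ⟨H x, hHnonneg x hx0, hHinv' x hx0⟩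
      exact this
    · -- a > 0
      have hIa : Hinv a ∈ Ici (0:ℝ) := (hHinv a ha).1
      have hIapos : 0 < Hinv a := by
        rcases eq_or_lt_of_le (mem_Ici.1 hIa) with heq | hlt
        · exfalso
          have := (hHinv a ha).2
          rw [← heq, hH0] at this
          linarith
        · exact hlt
      have : ContinuousAt Hinv a := by
        apply hHinvMono.continuousAt_of_image_mem_nhds
          (Ici_mem_nhds hapos)
        have hsub : Ici (0:ℝ) ⊆ Hinv '' Ici 0 := by
          intro x hx
          exact ⟨H x, hHnonneg x hx, hHinv' x hx⟩
        exact mem_of_superset (Ici_mem_nhds hIapos) hsub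
      exact this.continuousWithinAt
  -- the integrand
  set φ : ℝ → ℝ := fun s => β s * h (Hinv (u t₀ / b s)) with hφdef
  have hbq : Continuous (fun s => u t₀ / b s) :=
    continuous_const.div hb (fun s => (hbpos s).ne')
  have hbqpos : ∀ s, 0 < u t₀ / b s := fun s => div_pos hu₀ (hbpos s)
  have hHinvb : Continuous (fun s => Hinv (u t₀ / b s)) :=
    hHinvCont.comp_continuous hbq (fun s => (hbqpos s).le)
  have hφcont : Continuous φ := by
    apply hβ.mul
    exact hhcont.comp_continuous hHinvb (fun s => (hHinv _ (hbqpos s).le).1)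
  -- pointwise bound : φ s ≤ deriv u s for s ≥ t₀
  have hφle : ∀ s ≥ t₀, φ s ≤ deriv u s := by
    intro s hs
    have h1 : u t₀ / b s ≤ H (v s) := by
      rw [div_le_iff₀ (hbpos s)]
      calc u t₀ ≤ u s := hge s hs
        _ ≤ |u s| := le_abs_self _
        _ ≤ b s * H (v s) := hub s
        _ = H (v s) * b s := mul_comm _ _
    have hvi : Hinv (u t₀ / b s) ≤ v s := by
      by_contra hcon
      push_neg at hcon
      have := hHmono (hvnonneg s) (hHinv _ (hbqpos s).le).1 hcon
      rw [(hHinv _ (hbqpos s).le).2] at this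
      linarith
    have h2 : h (Hinv (u t₀ / b s)) ≤ h (v s) :=
      hhmono (hHinv _ (hbqpos s).le).1 (hvnonneg s) hvi
    calc φ s ≤ β s * h (v s) := by
          exact mul_le_mul_of_nonneg_left h2 (hβpos s).le
      _ ≤ deriv u s := hud s
  -- g is monotone on Ici t₀
  set g : ℝ → ℝ := fun t => u t - ∫ s in t₀..t, φ s with hgdef
  have hgderiv : ∀ x, HasDerivAt g (deriv u x - φ x) x := by
    intro x
    exact ((hu x).hasDerivAt).sub ((hφcont.integral_hasStrictDerivAt t₀ x).hasDerivAt)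
  have hgmono : MonotoneOn g (Ici t₀) := by
    apply monotoneOn_of_deriv_nonneg (convex_Ici t₀)
    · exact fun x _ => ((hgderiv x).continuousAt).continuousWithinAt
    · intro x _
      exact ((hgderiv x).differentiableAt).differentiableWithinAt
    · intro x hx
      rw [interior_Ici] at hx
      rw [(hgderiv x).deriv]
      have := hφle x (le_of_lt hx)
      linarith
  -- main argument
  intro M
  set M' : ℝ := max M 0 with hM'def
  have hM'0 : (0:ℝ) ≤ M' := le_max_right _ _
  have hfreq := (hlimsup (H M')).and_eventually (eventually_ge_atTop t₀)
  apply hfreq.mono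
  rintro t ⟨hlt, hge'⟩
  have hI : (∫ s in t₀..t, φ s) ≤ u t - u t₀ := by
    have := hgmono self_mem_Ici (mem_Ici.2 hge') hge'
    simp only [hgdef, intervalIntegral.integral_same, sub_zero] at this
    linarith
  have hH : (1 / b t) * ∫ s in t₀..t, φ s ≤ H (v t) := by
    rw [one_div, inv_mul_le_iff₀ (hbpos t)]
    calc (∫ s in t₀..t, φ s) ≤ u t - u t₀ := hI
      _ ≤ u t := by linarith
      _ ≤ |u t| := le_abs_self _
      _ ≤ b t * H (v t) := hub t
  have hHM : H M' < H (v t) := lt_of_lt_of_le hlt hH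
  have hM'v : M' < v t := by
    by_contra hcon
    push_neg at hcon
    have := hHmono.monotoneOn (hvnonneg t) hM'0 hcon
    linarith
  exact lt_of_le_of_lt (le_max_left M 0) hM'v
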